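/- Let H be a self-adjoint operator with all eigenvalues ≥ λ₊ on the range of an orthogonal projection Π₊ (i.e. Π₊HΠ₊ ≥ λ₊Π₊ on ran Π₊ and HΠ₊ = Π₊H), let H̃ = H + V, and let Π̃ be a spectral projection of H̃ with ‖H̃Π̃‖ ≤ c for some c < λ₊. Then ‖Π₊Π̃‖ ≤ ‖V‖/(λ₊ − c). -/

import Mathlib

open scoped Matrix.Norms.L2Operator ComplexOrder

open Matrix in

/-- Let `H` be self-adjoint commuting with the orthogonal projection `Π₊`, with all
eigenvalues of `H` on the range of `Π₊` at least `λ₊` (i.e. `Π₊ H Π₊ ⪰ λ₊ Π₊`).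
Let `H̃ = H + V` and let `Π̃` be an orthogonal spectral projection of `H̃` with
`‖H̃ Π̃‖ ≤ c < λ₊`.  Then `‖Π₊ Π̃‖ ≤ ‖V‖ / (λ₊ - c)`. -/
theorem overlap_of_spectral_projections {n : Type*} [Fintype n] [DecidableEq n]
    (H V Pp Pit : Matrix n n ℂ) (lamp c : ℝ)
    (hH : H.IsHermitian) (hV : V.IsHermitian)
    (hPp : Pp.IsHermitian) (hPp' : Pp * Pp = Pp)
    (hHPp : H * Pp = Pp * H)
    (hge : (Pp * H * Pp - (lamp : ℂ) • Pp).PosSemidef)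
    (hPit : Pit.IsHermitian) (hPit' : Pit * Pit = Pit)
    (hcomm : (H + V) * Pit = Pit * (H + V))
    (hc : ‖(H + V) * Pit‖ ≤ c) (hclam : c < lamp) :
    ‖Pp * Pit‖ ≤ ‖V‖ / (lamp - c) := by
  classical
  have hc0 : (0:ℝ) ≤ c := le_trans (norm_nonneg _) hc
  have hlamp : (0:ℝ) < lamp := lt_of_le_of_lt hc0 hclam
  -- projections have norm at most one
  have hproj : ∀ P : Matrix n n ℂ, P.IsHermitian → P * P = P → ‖P‖ ≤ 1 := by
    intro P hPh hPi
    have h1 := Matrix.l2_opNorm_conjTranspose_mul_self P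
    rw [hPh.eq, hPi] at h1
    nlinarith [norm_nonneg P]
  have hPpn := hproj Pp hPp hPp'
  have hPitn := hproj Pit hPit hPit'
  -- the key algebraic identity
  have e1 : (Pp * H * Pp) * (Pp * Pit) = Pp * H * Pit := by
    calc Pp * H * Pp * (Pp * Pit) = Pp * H * (Pp * Pp) * Pit := by noncomm_ring
      _ = Pp * (H * Pp) * Pit := by rw [hPp']; noncomm_ring
      _ = Pp * (Pp * H) * Pit := by rw [hHPp]
      _ = Pp * Pp * (H * Pit) := by noncomm_ring
      _ = Pp * H * Pit := by rw [hPp']; noncomm_ring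
  have e2 : (Pp * Pit) * ((H + V) * Pit) = Pp * H * Pit + Pp * V * Pit := by
    have h3 : Pit * ((H + V) * Pit) = (H + V) * Pit := by
      calc Pit * ((H + V) * Pit) = Pit * (H + V) * Pit := by noncomm_ring
        _ = (H + V) * Pit * Pit := by rw [← hcomm]
        _ = (H + V) * (Pit * Pit) := by noncomm_ring
        _ = (H + V) * Pit := by rw [hPit']
    calc (Pp * Pit) * ((H + V) * Pit) = Pp * (Pit * ((H + V) * Pit)) := by noncomm_ring
      _ = Pp * ((H + V) * Pit) := by rw [h3]
      _ = Pp * H * Pit + Pp * V * Pit := by noncomm_ring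
  have key : (Pp * H * Pp) * (Pp * Pit)
      = (Pp * Pit) * ((H + V) * Pit) - Pp * V * Pit := by
    rw [e1, e2]; abel
  -- norm bound for the error term
  have hPVP : ‖Pp * V * Pit‖ ≤ ‖V‖ := by
    have h1 : ‖Pp * V * Pit‖ ≤ ‖Pp * V‖ * ‖Pit‖ := Matrix.l2_opNorm_mul _ _
    have h2 : ‖Pp * V‖ ≤ ‖Pp‖ * ‖V‖ := Matrix.l2_opNorm_mul _ _
    have h3 : ‖Pp‖ * ‖V‖ ≤ ‖V‖ := mul_le_of_le_one_left (norm_nonneg V) hPpn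
    have h4 : ‖Pp * V‖ * ‖Pit‖ ≤ ‖Pp * V‖ :=
      mul_le_of_le_one_right (norm_nonneg _) hPitn
    linarith
  -- pointwise estimate
  have ptwise : ∀ x : EuclideanSpace ℂ n,
      lamp * ‖(EuclideanSpace.equiv n ℂ).symm ((Pp * Pit) *ᵥ x)‖
        ≤ (c * ‖Pp * Pit‖ + ‖V‖) * ‖x‖ := by
    intro x
    set v : n → ℂ := (Pp * Pit) *ᵥ x with hv
    set y : EuclideanSpace ℂ n := (EuclideanSpace.equiv n ℂ).symm v with hy
    have hPv : Pp *ᵥ v = v := by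
      rw [hv, Matrix.mulVec_mulVec]
      have h5 : Pp * (Pp * Pit) = Pp * Pit := by
        calc Pp * (Pp * Pit) = Pp * Pp * Pit := by noncomm_ring
          _ = Pp * Pit := by rw [hPp']
      rw [h5]
    -- lower bound from positivity
    have h0 := hge.dotProduct_mulVec_nonneg v
    rw [Matrix.sub_mulVec, Matrix.smul_mulVec, dotProduct_sub,
      dotProduct_smul] at h0
    have h1 : (lamp : ℂ) • (dotProduct (star v) (Pp *ᵥ v))
        ≤ dotProduct (star v) ((Pp * H * Pp) *ᵥ v) := sub_nonneg.mp h0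
    have h2 : lamp * ((dotProduct (star v) (Pp *ᵥ v)).re)
        ≤ (dotProduct (star v) ((Pp * H * Pp) *ᵥ v)).re := by
      have h6 := (Complex.le_def.mp h1).1
      simpa [smul_eq_mul, Complex.mul_re] using h6
    have hself : (dotProduct (star v) (Pp *ᵥ v)).re = ‖y‖ ^ 2 := by
      rw [hPv]
      have h7 : dotProduct (star v) v = (inner ℂ y y : ℂ) := by
        rw [EuclideanSpace.inner_eq_star_dotProduct]; simp [hy, dotProduct_comm]
      rw [h7, inner_self_eq_norm_sq_to_K (𝕜 := ℂ)]
      norm_cast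
    -- Cauchy–Schwarz upper bound
    set w : EuclideanSpace ℂ n :=
      (EuclideanSpace.equiv n ℂ).symm ((Pp * H * Pp) *ᵥ v) with hw
    have h3 : (dotProduct (star v) ((Pp * H * Pp) *ᵥ v)).re ≤ ‖y‖ * ‖w‖ := by
      have h4 : dotProduct (star v) ((Pp * H * Pp) *ᵥ v) = (inner ℂ y w : ℂ) := by
        rw [EuclideanSpace.inner_eq_star_dotProduct]; simp [hy, hw, dotProduct_comm]
      rw [h4]
      exact re_inner_le_norm (𝕜 := ℂ) y w
    have hyw : lamp * ‖y‖ ^ 2 ≤ ‖y‖ * ‖w‖ := by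
      rw [← hself]; linarith
    -- bound on ‖w‖
    have hwb : ‖w‖ ≤ (c * ‖Pp * Pit‖ + ‖V‖) * ‖x‖ := by
      have hAv : (Pp * H * Pp) *ᵥ v
          = ((Pp * Pit) * ((H + V) * Pit)) *ᵥ x - (Pp * V * Pit) *ᵥ x := by
        rw [hv, Matrix.mulVec_mulVec, key, Matrix.sub_mulVec]
      have hsplit : w
          = (EuclideanSpace.equiv n ℂ).symm (((Pp * Pit) * ((H + V) * Pit)) *ᵥ x)
            - (EuclideanSpace.equiv n ℂ).symm ((Pp * V * Pit) *ᵥ x) := by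
        rw [hw, hAv]; rfl
      rw [hsplit]
      refine le_trans (norm_sub_le _ _) ?_
      have hb1 : ‖(EuclideanSpace.equiv n ℂ).symm
          (((Pp * Pit) * ((H + V) * Pit)) *ᵥ x)‖ ≤ c * ‖Pp * Pit‖ * ‖x‖ := by
        have hcomp : ((Pp * Pit) * ((H + V) * Pit)) *ᵥ x
            = (Pp * Pit) *ᵥ (((H + V) * Pit) *ᵥ x) := by
          rw [Matrix.mulVec_mulVec]
        rw [hcomp]
        have hb2 : ‖(EuclideanSpace.equiv n ℂ).symm
              ((Pp * Pit) *ᵥ (((H + V) * Pit) *ᵥ x))‖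
            ≤ ‖Pp * Pit‖ * ‖(EuclideanSpace.equiv n ℂ).symm
              (((H + V) * Pit) *ᵥ x)‖ :=
          Matrix.l2_opNorm_mulVec (Pp * Pit)
            ((EuclideanSpace.equiv n ℂ).symm (((H + V) * Pit) *ᵥ x))
        have hb3 : ‖(EuclideanSpace.equiv n ℂ).symm (((H + V) * Pit) *ᵥ x)‖
            ≤ ‖(H + V) * Pit‖ * ‖x‖ := Matrix.l2_opNorm_mulVec _ x
        have hb5 : ‖(H + V) * Pit‖ * ‖x‖ ≤ c * ‖x‖ :=
          mul_le_mul_of_nonneg_right hc (norm_nonneg x)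
        have hTnn : (0:ℝ) ≤ ‖Pp * Pit‖ := norm_nonneg _
        calc ‖(EuclideanSpace.equiv n ℂ).symm
              ((Pp * Pit) *ᵥ (((H + V) * Pit) *ᵥ x))‖
            ≤ ‖Pp * Pit‖ * ‖(EuclideanSpace.equiv n ℂ).symm
              (((H + V) * Pit) *ᵥ x)‖ := hb2
          _ ≤ ‖Pp * Pit‖ * (c * ‖x‖) :=
              mul_le_mul_of_nonneg_left (le_trans hb3 hb5) hTnn
          _ = c * ‖Pp * Pit‖ * ‖x‖ := by ring
      have hb4 : ‖(EuclideanSpace.equiv n ℂ).symm ((Pp * V * Pit) *ᵥ x)‖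
          ≤ ‖V‖ * ‖x‖ := by
        refine le_trans (Matrix.l2_opNorm_mulVec (Pp * V * Pit) x) ?_
        exact mul_le_mul_of_nonneg_right hPVP (norm_nonneg x)
      linarith
    -- combine
    rcases eq_or_lt_of_le (norm_nonneg y) with hy0 | hy0
    · rw [← hy0]
      have hrhs : (0:ℝ) ≤ (c * ‖Pp * Pit‖ + ‖V‖) * ‖x‖ :=
        mul_nonneg (add_nonneg (mul_nonneg hc0 (norm_nonneg _)) (norm_nonneg V))
          (norm_nonneg x)
      simpa using hrhs
    · have h8 : lamp * ‖y‖ ≤ ‖w‖ := by nlinarith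
      calc lamp * ‖y‖ ≤ ‖w‖ := h8
        _ ≤ (c * ‖Pp * Pit‖ + ‖V‖) * ‖x‖ := hwb
  -- convert to an operator norm bound
  have hTb : ‖Pp * Pit‖ ≤ (c * ‖Pp * Pit‖ + ‖V‖) / lamp := by
    rw [Matrix.l2_opNorm_def]
    refine ContinuousLinearMap.opNorm_le_bound _ ?_ ?_
    · have h6 : (0:ℝ) ≤ ‖Pp * Pit‖ := norm_nonneg _
      have h9 : (0:ℝ) ≤ ‖V‖ := norm_nonneg _
      positivity
    · intro x
      rw [div_mul_eq_mul_div, le_div_iff₀ hlamp, mul_comm]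
      exact ptwise x
  have h7 : ‖Pp * Pit‖ * lamp ≤ c * ‖Pp * Pit‖ + ‖V‖ := by
    rw [le_div_iff₀ hlamp] at hTb
    exact hTb
  rw [le_div_iff₀ (by linarith : (0:ℝ) < lamp - c)]
  nlinarith [norm_nonneg (Pp * Pit)]
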